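/- Let G be a metabelian group, x, y, z ∈ G, and δ a natural number. Then ⁅⁅x,y⁆, z^δ⁆ = ∏_{l=0}^{δ-1} z^{-l} · (⁅⁅z,y⁆, x⁆ · ⁅⁅z,x⁆, y⁆⁻¹) · z^{l} (the factors lie in the abelian subgroup G', so the order of the product is irrelevant). -/
import Mathlib


/-- The commutator ⁅a,b⁆ = a⁻¹b⁻¹ab (paper convention). -/
def pcomm {G : Type*} [Group G] (a b : G) : G := a⁻¹ * b⁻¹ * a * b

section Aux

variable {G : Type*} [Group G]

lemma pcomm_mem (a b : G) : pcomm a b ∈ commutator G := by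
  have h := Subgroup.commutator_mem_commutator (Subgroup.mem_top a⁻¹) (Subgroup.mem_top b⁻¹)
  rw [commutator_def]
  simpa [commutatorElement_def, pcomm, mul_assoc] using h

lemma conj_mem' (u g : G) (hu : u ∈ commutator G) : g⁻¹ * u * g ∈ commutator G := by
  have hn : (commutator G).Normal := by rw [commutator_def]; infer_instance
  simpa [mul_assoc] using hn.conj_mem u hu g⁻¹

variable (hG : ∀ a b : G, a ∈ commutator G → b ∈ commutator G → a * b = b * a)

include hG

lemma swap_conj (u g h : G) (hu : u ∈ commutator G) :
    h⁻¹ * (g⁻¹ * u * g) * h = g⁻¹ * (h⁻¹ * u * h) * g := by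
  have hc : pcomm g h ∈ commutator G := pcomm_mem g h
  have hX : (h * g)⁻¹ * u * (h * g) ∈ commutator G := conj_mem' u (h * g) hu
  have hcomm := hG _ _ hX hc
  have h1 : h⁻¹ * (g⁻¹ * u * g) * h =
      (pcomm g h)⁻¹ * ((h * g)⁻¹ * u * (h * g)) * (pcomm g h) := by
    unfold pcomm; group
  rw [h1, mul_assoc, hcomm, ← mul_assoc, inv_mul_cancel, one_mul]
  group

lemma pcomm_conj (u g h : G) (hu : u ∈ commutator G) :
    pcomm (g⁻¹ * u * g) h = g⁻¹ * pcomm u h * g := by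
  have h1 := swap_conj hG u g h hu
  have h2 : pcomm (g⁻¹ * u * g) h = (g⁻¹ * u⁻¹ * g) * (h⁻¹ * (g⁻¹ * u * g) * h) := by
    unfold pcomm; group
  rw [h2, h1]
  unfold pcomm; group

lemma pcomm_inv_left (u g : G) (hu : u ∈ commutator G) :
    pcomm u⁻¹ g = (pcomm u g)⁻¹ := by
  have h := hG u (g⁻¹ * u⁻¹ * g) hu (conj_mem' u⁻¹ g (inv_mem hu))
  have h1 : pcomm u⁻¹ g = u * (g⁻¹ * u⁻¹ * g) := by unfold pcomm; group
  have h2 : (pcomm u g)⁻¹ = (g⁻¹ * u⁻¹ * g) * u := by unfold pcomm; group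
  rw [h1, h2, h]

omit hG in
lemma hallWitt (x y z : G) :
    (y⁻¹ * pcomm (pcomm x y⁻¹) z * y) * (z⁻¹ * pcomm (pcomm y z⁻¹) x * z) *
      (x⁻¹ * pcomm (pcomm z x⁻¹) y * x) = 1 := by
  unfold pcomm; group

lemma conj_pcomm (x y z : G) :
    y⁻¹ * pcomm (pcomm x y⁻¹) z * y = (pcomm (pcomm x y) z)⁻¹ := by
  have hu : (pcomm x y)⁻¹ ∈ commutator G := inv_mem (pcomm_mem x y)
  have h1 : pcomm x y⁻¹ = (y⁻¹)⁻¹ * (pcomm x y)⁻¹ * y⁻¹ := by unfold pcomm; group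
  rw [h1, pcomm_conj hG _ y⁻¹ z hu, pcomm_inv_left hG _ z (pcomm_mem x y)]
  group

lemma key (x y z : G) :
    pcomm (pcomm x y) z = pcomm (pcomm z y) x * (pcomm (pcomm z x) y)⁻¹ := by
  have hw := hallWitt x y z
  rw [conj_pcomm hG x y z, conj_pcomm hG y z x, conj_pcomm hG z x y] at hw
  have hP : pcomm (pcomm x y) z =
      (pcomm (pcomm y z) x)⁻¹ * (pcomm (pcomm z x) y)⁻¹ := by
    have h2 : (pcomm (pcomm x y) z)⁻¹ *
        ((pcomm (pcomm y z) x)⁻¹ * (pcomm (pcomm z x) y)⁻¹) = 1 := by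
      rw [← mul_assoc]; exact hw
    have h3 := eq_inv_of_mul_eq_one_left h2
    rw [← inv_inv (pcomm (pcomm x y) z), h3, inv_inv]
  rw [hP]
  congr 1
  rw [show pcomm y z = (pcomm z y)⁻¹ by unfold pcomm; group,
    pcomm_inv_left hG _ x (pcomm_mem z y), inv_inv]

omit hG in
lemma conj_list_prod (g : G) (L : List G) :
    g⁻¹ * L.prod * g = (L.map fun w => g⁻¹ * w * g).prod := by
  induction L with
  | nil => simp
  | cons a t ih => simp only [List.map_cons, List.prod_cons, ← ih]; group

end Aux

theorem stmt7 {G : Type*} [Group G]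
    (hG : ∀ a b : G, a ∈ commutator G → b ∈ commutator G → a * b = b * a)
    (x y z : G) (δ : ℕ) :
    pcomm (pcomm x y) (z ^ δ) =
      ((List.range δ).map fun l =>
        (z ^ l)⁻¹ * (pcomm (pcomm z y) x * (pcomm (pcomm z x) y)⁻¹) * z ^ l).prod := by
  set c := pcomm (pcomm z y) x * (pcomm (pcomm z x) y)⁻¹ with hc
  induction δ with
  | zero => simp only [pow_zero, List.range_zero, List.map_nil, List.prod_nil]; unfold pcomm; group
  | succ n ih =>
    have split : pcomm (pcomm x y) (z ^ (n + 1)) =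
        pcomm (pcomm x y) z * (z⁻¹ * pcomm (pcomm x y) (z ^ n) * z) := by
      rw [pow_succ]; unfold pcomm; group
    rw [split, ih, key hG x y z, ← hc, conj_list_prod, List.map_map,
      List.range_succ_eq_map, List.map_cons, List.prod_cons]
    congr 1
    · simp
    · congr 1
      rw [List.map_map]
      congr 1
      funext l
      simp only [Function.comp_apply]
      rw [pow_succ]
      group
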